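/- arXiv:2509.20326 — 5 statements merged into one kernel-verified Lean document; each statement's English description precedes it below -/
import Mathlib

section
/- Let F : [0,∞] → [0,∞] be left-continuous and non-decreasing, and set s = sup{t ∈ [0,∞] : F(t) < F(∞)}. If s > 0, then for every ε > 0 there exists a strictly increasing sequence t₀ < t₁ < t₂ < … of elements of [0,s) with t₀ = 0, lim_{i→∞} tᵢ = s, and such that for every i ≥ 1 and all t ∈ (t_{i-1}, tᵢ], we have |F(tᵢ) − F(t)| ≤ ε. -/
open MeasureTheory Metric ENNReal Set Filter Topology
noncomputable section

/-- Staircase Lemma: a left-continuous non-decreasing `F : [0,∞] → [0,∞]` admits,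
for every `ε > 0`, a strictly increasing staircase sequence `t₀ = 0 < t₁ < t₂ < …` in `[0, s)`
tending to `s = sup {t : F t < F ∞}`, with `|F (tᵢ) − F t| ≤ ε` for `t ∈ (t_{i-1}, tᵢ]`. -/
theorem stmt_0 (F : ℝ≥0∞ → ℝ≥0∞)
    (hmono : Monotone F)
    (hleft : ∀ t : ℝ≥0∞, ContinuousWithinAt F (Set.Iio t) t)
    (s : ℝ≥0∞) (hs : s = sSup {t : ℝ≥0∞ | F t < F ⊤})
    (hspos : 0 < s) (ε : ℝ≥0∞) (hε : 0 < ε) :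
    ∃ t : ℕ → ℝ≥0∞, StrictMono t ∧ t 0 = 0 ∧ (∀ i, t i < s) ∧
      Filter.Tendsto t Filter.atTop (nhds s) ∧
      ∀ i : ℕ, ∀ u : ℝ≥0∞, t i < u → u ≤ t (i + 1) →
        F (t (i + 1)) ≤ F u + ε ∧ F u ≤ F (t (i + 1)) + ε := by
  classical
  obtain ⟨a, ha_mono, ha_mem, ha_tendsto⟩ := exists_seq_strictMono_tendsto' hspos
  set L : ℝ≥0∞ → ℝ≥0∞ := fun x => ⨅ u ∈ Set.Ioi x, F u with hLdef
  have hLle : ∀ x u, x < u → L x ≤ F u := fun x u h => biInf_le F h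
  -- the "cap" point
  set c : ℝ≥0∞ → ℝ≥0∞ := fun x => sSup {v | x < v ∧ F v ≤ L x + ε} with hcdef
  -- existence of a good next point
  have hA : ∀ x, x < s → ∃ y, x < y ∧ y < s ∧ F y ≤ L x + ε := by
    intro x hx
    have hxt : x < ⊤ := hx.trans_le le_top
    have hex : ∃ u, x < u ∧ F u ≤ L x + ε := by
      rcases eq_or_ne (L x) ⊤ with h | h
      · exact ⟨⊤, hxt, by simp [h]⟩
      · have hlt : L x < L x + ε := ENNReal.lt_add_right h hε.ne'
        have : (⨅ u ∈ Set.Ioi x, F u) < L x + ε := hlt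
        simp only [iInf_lt_iff] at this
        obtain ⟨u, hu, hFu⟩ := this
        exact ⟨u, hu, hFu.le⟩
    obtain ⟨u, hxu, hFu⟩ := hex
    obtain ⟨y, hy1, hy2⟩ := exists_between (lt_min hxu hx)
    exact ⟨y, hy1, hy2.trans_le (min_le_right _ _),
      le_trans (hmono (hy2.trans_le (min_le_left _ _)).le) hFu⟩
  choose! w hw1 hw2 hw3 using hA
  have hwc : ∀ x, x < s → w x ≤ c x := fun x hx => le_sSup ⟨hw1 x hx, hw3 x hx⟩
  have hxc : ∀ x, x < s → x < c x := fun x hx => (hw1 x hx).trans_le (hwc x hx)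
  -- everything in (x, c x] has value ≤ L x + ε
  have hBlt : ∀ x v, x < v → v < c x → F v ≤ L x + ε := by
    intro x v hxv hvc
    obtain ⟨z, ⟨hz1, hz2⟩, hvz⟩ := lt_sSup_iff.1 hvc
    exact (hmono hvz.le).trans hz2
  have hB : ∀ x, x < s → ∀ v, x < v → v ≤ c x → F v ≤ L x + ε := by
    intro x hx v hxv hvc
    rcases lt_or_eq_of_le hvc with h | h
    · exact hBlt x v hxv h
    · subst h
      haveI : (𝓝[<] (c x)).NeBot := nhdsWithin_Iio_self_neBot' ⟨x, hxv⟩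
      refine le_of_tendsto (hleft (c x)) ?_
      filter_upwards [Ioo_mem_nhdsLT_of_mem ⟨hxv, le_refl (c x)⟩] with z hz
      exact hBlt x z hz.1 hz.2
  -- beyond c x, values exceed L x + ε
  have hC : ∀ x, x < s → ∀ y, c x ≤ y → L x + ε ≤ L y := by
    intro x hx y hcy
    refine le_iInf₂ fun u hu => ?_
    have hcu : c x < u := hcy.trans_lt hu
    by_contra hcon
    push_neg at hcon
    exact hcu.not_ge (le_sSup ⟨(hxc x hx).trans hcu, hcon.le⟩)
  -- the staircase
  set t : ℕ → ℝ≥0∞ := fun n =>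
    Nat.rec 0 (fun n x => min (c x) (max (a (n + 1)) (w x))) n with htdef
  have ht0 : t 0 = 0 := rfl
  have htsucc : ∀ n, t (n + 1) = min (c (t n)) (max (a (n + 1)) (w (t n))) := fun n => rfl
  have hts : ∀ n, t n < s := by
    intro n
    induction n with
    | zero => exact hspos
    | succ n ih =>
      rw [htsucc]
      exact (min_le_right _ _).trans_lt (max_lt (ha_mem (n + 1)).2 (hw2 _ ih))
  have hlt : ∀ n, t n < t (n + 1) := by
    intro n
    rw [htsucc]
    exact lt_min (hxc _ (hts n)) ((hw1 _ (hts n)).trans_le (le_max_right _ _))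
  have htmono : StrictMono t := strictMono_nat_of_lt_succ hlt
  have hFstep : ∀ n, F (t (n + 1)) ≤ L (t n) + ε :=
    fun n => hB (t n) (hts n) _ (hlt n) ((htsucc n).le.trans (min_le_left _ _))
  -- convergence
  set T : ℝ≥0∞ := ⨆ n, t n with hTdef
  have h_tend : Filter.Tendsto t Filter.atTop (nhds T) := tendsto_atTop_iSup htmono.monotone
  have hTs : T = s := by
    refine le_antisymm (iSup_le fun n => (hts n).le) ?_
    by_contra hcon
    push_neg at hcon
    have hT : T < s := hcon
    obtain ⟨u, hu1, hu2⟩ := exists_between hT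
    have hFu : F u < ⊤ := by
      rw [hs] at hu2
      obtain ⟨v, hv, huv⟩ := lt_sSup_iff.1 hu2
      exact ((hmono huv.le).trans_lt hv).trans_le le_top
    have hLM : ∀ n, L (t n) ≤ F u := fun n => hLle _ _ ((le_iSup t n).trans_lt hu1)
    obtain ⟨N, hN⟩ := (ha_tendsto.eventually (eventually_gt_nhds hT)).exists_forall_of_atTop
    have hcap : ∀ n, N ≤ n → L (t n) + ε ≤ L (t (n + 1)) := by
      intro n hn
      refine hC (t n) (hts n) _ ?_
      rcases le_total (c (t n)) (max (a (n + 1)) (w (t n))) with h | h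
      · rw [htsucc, min_eq_left h]
      · exfalso
        have h1 : a (n + 1) ≤ t (n + 1) := by
          rw [htsucc, min_eq_right h]; exact le_max_left _ _
        exact ((hN (n + 1) (hn.trans (Nat.le_succ n))).trans_le
          (h1.trans (le_iSup t (n + 1)))).false
    have hgrow : ∀ k : ℕ, (k : ℝ≥0∞) * ε ≤ L (t (N + k)) := by
      intro k
      induction k with
      | zero => simp
      | succ k ih =>
        calc ((k + 1 : ℕ) : ℝ≥0∞) * ε = (k : ℝ≥0∞) * ε + ε := by
              push_cast; ring
          _ ≤ L (t (N + k)) + ε := add_le_add_left ih ε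
          _ ≤ L (t (N + k + 1)) := hcap _ (Nat.le_add_right N k)
          _ = L (t (N + (k + 1))) := by ring_nf
    obtain ⟨k, hk⟩ := ENNReal.exists_nat_mul_gt hε.ne' hFu.ne
    exact hk.not_ge ((hgrow k).trans (hLM _))
  refine ⟨t, htmono, ht0, hts, hTs ▸ h_tend, ?_⟩
  intro i u hu1 hu2
  refine ⟨(hFstep i).trans (add_le_add_left (hLle _ _ hu1) ε), ?_⟩
  exact (hmono hu2).trans le_self_add
end
end

section
/- Let Ω ⊂ ℝⁿ be open and bounded, φ : Ω → [0,∞] measurable, and γ ∈ (0,1). Then ∫_Ω (μφ⁺(φ(x)))^{−γ} dmₙ(x) ≤ (1−γ)^{−1} [mₙ(Ω)]^{1−γ}, where μφ⁺(t) = mₙ({x ∈ Ω : φ(x) ≥ t}). -/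
open MeasureTheory Metric ENNReal Set Filter Topology
noncomputable section

/-- Key distribution bound: the measure of the set where the "upper distribution
function of `φ` evaluated at `φ x`" is `< u` is at most `u`. -/
lemma aux_key {α : Type*} [MeasurableSpace α] (ν : Measure α) (φ : α → ℝ≥0∞)
    (u : ℝ≥0∞) :
    ν {x | ν {z | φ x ≤ φ z} < u} ≤ u := by
  set A : Set α := {x | ν {z | φ x ≤ φ z} < u} with hA
  rcases A.eq_empty_or_nonempty with h | hne
  · simp [h]
  by_cases hmin : ∃ x₀ ∈ A, ∀ x ∈ A, φ x₀ ≤ φ x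
  · obtain ⟨x₀, hx₀A, hx₀⟩ := hmin
    calc ν A ≤ ν {z | φ x₀ ≤ φ z} := measure_mono fun x hx => hx₀ x hx
    _ ≤ u := le_of_lt hx₀A
  · push_neg at hmin
    have hSne : (φ '' A).Nonempty := hne.image φ
    obtain ⟨t, ht_anti, ht_tendsto, ht_mem⟩ :=
      exists_seq_tendsto_sInf hSne (OrderBot.bddBelow _)
    have hsub : A ⊆ ⋃ k, {z | t k ≤ φ z} := by
      intro x hx
      have hlt : sInf (φ '' A) < φ x := by
        rcases lt_or_eq_of_le (csInf_le (OrderBot.bddBelow _) (Set.mem_image_of_mem φ hx)) with h | h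
        · exact h
        · obtain ⟨y, hyA, hy⟩ := hmin x hx
          exact absurd (csInf_le (OrderBot.bddBelow _) (Set.mem_image_of_mem φ hyA))
            (by rw [h]; exact not_le.2 hy)
      obtain ⟨k, hk⟩ := (ht_tendsto.eventually_lt_const hlt).exists
      exact mem_iUnion.2 ⟨k, le_of_lt hk⟩
    have hmono : Monotone fun k => {z | t k ≤ φ z} := by
      intro i j hij
      exact fun z hz => le_trans (ht_anti hij) hz
    calc ν A ≤ ν (⋃ k, {z | t k ≤ φ z}) := measure_mono hsub
    _ = ⨆ k, ν {z | t k ≤ φ z} := hmono.measure_iUnion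
    _ ≤ u := by
        refine iSup_le fun k => ?_
        obtain ⟨xk, hxkA, hxk⟩ := ht_mem k
        rw [← hxk]
        exact le_of_lt hxkA

/-- Layer representation: the Lebesgue measure of `{t > 0 | ofReal t < a}` is `a`. -/
lemma aux_layer (a : ℝ≥0∞) :
    (volume.restrict (Ioi (0:ℝ))) {t : ℝ | ENNReal.ofReal t < a} = a := by
  have hmeas : MeasurableSet {t : ℝ | ENNReal.ofReal t < a} :=
    measurableSet_lt (ENNReal.measurable_ofReal) measurable_const
  rw [Measure.restrict_apply hmeas]
  rcases eq_or_ne a ⊤ with rfl | ha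
  · have : {t : ℝ | ENNReal.ofReal t < ⊤} ∩ Ioi 0 = Ioi 0 := by
      ext t; simp [ENNReal.ofReal_lt_top]
    rw [this]; simp
  · have : {t : ℝ | ENNReal.ofReal t < a} ∩ Ioi 0 = Ioo 0 a.toReal := by
      ext t
      simp only [mem_inter_iff, mem_setOf_eq, mem_Ioi, mem_Ioo]
      constructor
      · rintro ⟨h1, h2⟩
        exact ⟨h2, (ENNReal.ofReal_lt_iff_lt_toReal (le_of_lt h2) ha).1 h1⟩
      · rintro ⟨h1, h2⟩
        exact ⟨(ENNReal.ofReal_lt_iff_lt_toReal (le_of_lt h1) ha).2 h2, h1⟩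
    rw [this, Real.volume_Ioo, sub_zero, ENNReal.ofReal_toReal ha]

/-- For `γ ∈ (0,1)`:  `∫_Ω (μφ⁺ ∘ φ)^{−γ} ≤ (1−γ)⁻¹ mₙ(Ω)^{1−γ}`,
where `μφ⁺(t) = mₙ({x ∈ Ω : φ(x) ≥ t})` and `0^{−γ} = ∞`. -/
theorem stmt_4 (n : ℕ) (Ω : Set (EuclideanSpace ℝ (Fin n)))
    (hΩo : IsOpen Ω) (hΩb : Bornology.IsBounded Ω)
    (φ : EuclideanSpace ℝ (Fin n) → ℝ≥0∞) (hφ : Measurable φ)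
    (γ : ℝ) (hγ0 : 0 < γ) (hγ1 : γ < 1) :
    ∫⁻ x in Ω, (volume {z ∈ Ω | φ x ≤ φ z}) ^ (-γ) ∂volume ≤
      ENNReal.ofReal (1 / (1 - γ)) * (volume Ω) ^ (1 - γ) := by
  have hΩm : MeasurableSet Ω := hΩo.measurableSet
  have h1γ : (0:ℝ) < 1 - γ := by linarith
  set ν : Measure (EuclideanSpace ℝ (Fin n)) := volume.restrict Ω with hν
  -- rewrite the superlevel sets using the restricted measure
  have hset : ∀ s : ℝ≥0∞, volume {z ∈ Ω | s ≤ φ z} = ν {z | s ≤ φ z} := by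
    intro s
    rw [hν, Measure.restrict_apply (measurableSet_le measurable_const hφ)]
    congr 1
    ext z; simp only [mem_inter_iff, mem_setOf_eq, sep_setOf]
    tauto
  set ψ : EuclideanSpace ℝ (Fin n) → ℝ≥0∞ := fun x => ν {z | φ x ≤ φ z} with hψdef
  have hrw : ∀ x, volume {z ∈ Ω | φ x ≤ φ z} = ψ x := fun x => hset (φ x)
  have hψ : Measurable ψ := by
    have hanti : Antitone fun s : ℝ≥0∞ => ν {z | s ≤ φ z} := by
      intro s s' hss'
      exact measure_mono fun z hz => le_trans hss' hz
    exact hanti.measurable.comp hφ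
  simp only [hrw]
  -- trivial case: measure zero
  rcases eq_or_ne (volume Ω) 0 with hV0 | hV0
  · rw [setLIntegral_measure_zero _ _ hV0]
    exact zero_le
  have hVlt : volume Ω < ⊤ := hΩb.measure_lt_top
  set Vr : ℝ := (volume Ω).toReal with hVr
  have hVrpos : 0 < Vr := ENNReal.toReal_pos hV0 hVlt.ne
  have hVeq : volume Ω = ENNReal.ofReal Vr := (ENNReal.ofReal_toReal hVlt.ne).symm
  -- the product-measure / Tonelli step
  set g : EuclideanSpace ℝ (Fin n) → ℝ≥0∞ := fun x => ψ x ^ (-γ) with hg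
  have hgmeas : Measurable g := hψ.pow_const _
  set S : Set (EuclideanSpace ℝ (Fin n) × ℝ) :=
    {p | ENNReal.ofReal p.2 < g p.1} with hS
  have hSmeas : MeasurableSet S :=
    measurableSet_lt (ENNReal.measurable_ofReal.comp measurable_snd)
      (hgmeas.comp measurable_fst)
  set ν' : Measure ℝ := volume.restrict (Ioi (0:ℝ)) with hν'
  have step1 : ∫⁻ x in Ω, g x ∂volume = (ν.prod ν') S := by
    rw [Measure.prod_apply hSmeas]
    exact lintegral_congr fun x => (aux_layer (g x)).symm
  have step2 : (ν.prod ν') S = ∫⁻ t, ν {x | (x, t) ∈ S} ∂ν' :=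
    Measure.prod_apply_symm hSmeas
  -- pointwise bound on slices
  have hslice : ∀ t : ℝ, t ∈ Ioi (0:ℝ) →
      ν {x | (x, t) ∈ S} ≤ min ((ENNReal.ofReal t)⁻¹ ^ (1/γ)) (volume Ω) := by
    intro t _
    refine le_min ?_ ?_
    · refine le_trans (measure_mono ?_) (aux_key ν φ _)
      intro x hx
      simp only [hS, mem_setOf_eq, hg] at hx ⊢
      have h1 : ψ x ^ γ < (ENNReal.ofReal t)⁻¹ := by
        rw [← ENNReal.lt_inv_iff_lt_inv, ← ENNReal.rpow_neg]
        exact hx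
      calc ψ x = (ψ x ^ γ) ^ (1/γ) := by
            rw [← ENNReal.rpow_mul, mul_one_div, div_self hγ0.ne', ENNReal.rpow_one]
      _ < (ENNReal.ofReal t)⁻¹ ^ (1/γ) :=
            ENNReal.rpow_lt_rpow h1 (by positivity)
    · calc ν {x | (x, t) ∈ S} ≤ ν univ := measure_mono (subset_univ _)
      _ = volume Ω := Measure.restrict_apply_univ _
  -- the threshold
  set T : ℝ := Vr ^ (-γ) with hT
  have hTpos : 0 < T := Real.rpow_pos_of_pos hVrpos _
  have step3 : ∫⁻ t, ν {x | (x, t) ∈ S} ∂ν' ≤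
      ∫⁻ t in Ioi (0:ℝ), min ((ENNReal.ofReal t)⁻¹ ^ (1/γ)) (volume Ω) := by
    rw [hν']
    refine lintegral_mono_ae ?_
    filter_upwards [ae_restrict_mem measurableSet_Ioi] with t ht using hslice t ht
  have hp : -(1/γ) < -1 := by
    rw [neg_lt_neg_iff]
    exact one_lt_one_div hγ0 hγ1
  -- split the integral at T
  have hsplit : Ioi (0:ℝ) = Ioc 0 T ∪ Ioi T := (Ioc_union_Ioi_eq_Ioi hTpos.le).symm
  have step4 : ∫⁻ t in Ioi (0:ℝ), min ((ENNReal.ofReal t)⁻¹ ^ (1/γ)) (volume Ω) ≤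
      ENNReal.ofReal (Vr ^ (1-γ)) + ENNReal.ofReal (Vr ^ (1-γ) * (γ / (1-γ))) := by
    rw [hsplit, lintegral_union measurableSet_Ioi (Ioc_disjoint_Ioi le_rfl)]
    gcongr
    · -- head piece
      calc ∫⁻ t in Ioc (0:ℝ) T, min ((ENNReal.ofReal t)⁻¹ ^ (1/γ)) (volume Ω)
          ≤ ∫⁻ _ in Ioc (0:ℝ) T, volume Ω := lintegral_mono fun t => min_le_right _ _
        _ = volume Ω * ENNReal.ofReal T := by
            rw [setLIntegral_const, Real.volume_Ioc, sub_zero]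
        _ = ENNReal.ofReal (Vr ^ (1-γ)) := by
            rw [hVeq, ← ENNReal.ofReal_mul hVrpos.le]
            congr 1
            rw [hT, show (1:ℝ) - γ = 1 + -γ by ring, Real.rpow_add hVrpos,
              Real.rpow_one]
    · -- tail piece
      calc ∫⁻ t in Ioi T, min ((ENNReal.ofReal t)⁻¹ ^ (1/γ)) (volume Ω)
          ≤ ∫⁻ t in Ioi T, (ENNReal.ofReal t)⁻¹ ^ (1/γ) :=
            lintegral_mono fun t => min_le_left _ _
        _ = ∫⁻ t in Ioi T, ENNReal.ofReal (t ^ (-(1/γ))) := by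
            refine setLIntegral_congr_fun measurableSet_Ioi (fun t ht => ?_)
            have ht0 : 0 < t := lt_trans hTpos ht
            rw [Real.rpow_neg ht0.le,
              ENNReal.ofReal_inv_of_pos (Real.rpow_pos_of_pos ht0 _),
              ← ENNReal.ofReal_rpow_of_pos ht0, ← ENNReal.inv_rpow]
        _ = ENNReal.ofReal (∫ t in Ioi T, t ^ (-(1/γ))) := by
            rw [ofReal_integral_eq_lintegral_ofReal
              (integrableOn_Ioi_rpow_of_lt hp hTpos) ?_]
            filter_upwards [ae_restrict_mem measurableSet_Ioi] with t ht
            exact Real.rpow_nonneg (le_of_lt (lt_trans hTpos ht)) _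
        _ = ENNReal.ofReal (Vr ^ (1-γ) * (γ / (1-γ))) := by
            rw [integral_Ioi_rpow_of_lt hp hTpos]
            congr 1
            rw [hT, ← Real.rpow_mul hVrpos.le,
              show -γ * (-(1/γ) + 1) = 1 - γ by field_simp; ring]
            have hne : (1:ℝ) - γ ≠ 0 := by linarith
            rw [show -(1/γ) + 1 = -((1-γ)/γ) by field_simp; ring]
            rw [neg_div_neg_eq, div_div_eq_mul_div, mul_div_assoc]
  -- put it together
  calc ∫⁻ x in Ω, g x ∂volume
      = ∫⁻ t, ν {x | (x, t) ∈ S} ∂ν' := by rw [step1, step2]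
    _ ≤ ENNReal.ofReal (Vr ^ (1-γ)) + ENNReal.ofReal (Vr ^ (1-γ) * (γ / (1-γ))) :=
        le_trans step3 step4
    _ = ENNReal.ofReal (1 / (1 - γ)) * (volume Ω) ^ (1 - γ) := by
        rw [hVeq, ENNReal.ofReal_rpow_of_pos hVrpos,
          ← ENNReal.ofReal_add (by positivity) (by positivity),
          ← ENNReal.ofReal_mul (by positivity)]
        congr 1
        field_simp
        ring
end
end

section
/- Let Ω ⊂ ℝⁿ be open and bounded, φ : Ω → [0,∞] measurable, and γ ∈ (0,1). Then ∫_Ω (μφ⁻(φ(x)))^{−γ} dmₙ(x) ≥ (1−γ)^{−1} [mₙ(Ω)]^{1−γ}, where μφ⁻(t) = mₙ({x ∈ Ω : φ(x) > t}). -/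
open MeasureTheory Metric ENNReal Set Filter Topology
noncomputable section


private lemma ennreal_rpow_anti {c : ℝ} (hc : c < 0) : Antitone fun x : ℝ≥0∞ => x ^ c := by
  intro x y hxy
  have hpos : (0:ℝ) < -c := by linarith
  simp only
  rw [show c = -(-c) by ring, ENNReal.rpow_neg x, ENNReal.rpow_neg y]
  exact ENNReal.inv_le_inv.mpr (ENNReal.rpow_le_rpow hxy hpos.le)

private lemma key_claim {E : Type*} [MeasurableSpace E] (vol : Measure E) (Ω : Set E)
    (hΩ : MeasurableSet Ω) (hΩfin : vol Ω ≠ ∞) (φ : E → ℝ≥0∞) (hφ : Measurable φ)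
    (T : ℝ≥0∞) :
    min T (vol Ω) ≤ vol {x ∈ Ω | vol {z ∈ Ω | φ x < φ z} < T} := by
  rcases eq_or_lt_of_le (zero_le : 0 ≤ T) with h0 | hT
  · simp [← h0]
  set μd : ℝ≥0∞ → ℝ≥0∞ := fun t => vol {z ∈ Ω | t < φ z} with hμd
  have hanti : Antitone μd := by
    intro s t hst
    exact measure_mono (fun z hz => ⟨hz.1, lt_of_le_of_lt hst hz.2⟩)
  set S : Set ℝ≥0∞ := {s | μd s < T} with hS
  have hup : ∀ s ∈ S, ∀ s', s ≤ s' → s' ∈ S := fun s hs s' hss' =>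
    lt_of_le_of_lt (hanti hss') hs
  have htopS : (⊤ : ℝ≥0∞) ∈ S := by
    have : {z ∈ Ω | (⊤:ℝ≥0∞) < φ z} = ∅ := by
      ext z; simp [not_top_lt]
    simpa [hS, hμd, this] using hT
  set s₀ := sInf S with hs₀
  have hE : {x ∈ Ω | μd (φ x) < T} = {x ∈ Ω | φ x ∈ S} := rfl
  by_cases hmem : s₀ ∈ S
  · rcases eq_or_lt_of_le (zero_le : 0 ≤ s₀) with hz | hz
    · -- s₀ = 0 : the set is all of Ω
      have hsub : Ω ⊆ {x ∈ Ω | μd (φ x) < T} := by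
        intro x hx
        exact ⟨hx, hup s₀ hmem (φ x) (hz ▸ zero_le)⟩
      calc min T (vol Ω) ≤ vol Ω := min_le_right _ _
        _ ≤ _ := measure_mono hsub
    · -- 0 < s₀, and s₀ ∈ S
      obtain ⟨u, hu_mono, hu_mem, hu_tend⟩ := exists_seq_strictMono_tendsto' hz
      set A : ℕ → Set E := fun k => {z ∈ Ω | u k < φ z} with hA
      have hAmeas : ∀ k, NullMeasurableSet (A k) vol := fun k =>
        ((hΩ.inter (hφ measurableSet_Ioi)).nullMeasurableSet).congr (by
          simp [hA, Set.inter_comm]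
          rfl)
      have hAanti : Antitone A := by
        intro k l hkl z hz
        exact ⟨hz.1, lt_of_le_of_lt (hu_mono.monotone hkl) hz.2⟩
      have hfin : ∃ k, vol (A k) ≠ ∞ :=
        ⟨0, (lt_of_le_of_lt (measure_mono (fun z hz => hz.1)) hΩfin.lt_top).ne⟩
      have hsup : s₀ = ⨆ k, u k :=
        tendsto_nhds_unique hu_tend (tendsto_atTop_iSup hu_mono.monotone)
      have hInter : ⋂ k, A k = {z ∈ Ω | s₀ ≤ φ z} := by
        ext z
        simp only [mem_iInter, hA, mem_setOf_eq]
        constructor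
        · intro h
          exact ⟨(h 0).1, hsup ▸ iSup_le fun k => (h k).2.le⟩
        · intro hz k
          exact ⟨hz.1, lt_of_lt_of_le (hu_mem k).2 hz.2⟩
      have htend := tendsto_measure_iInter_atTop (μ := vol) hAmeas hAanti hfin
      have hTk : ∀ k, T ≤ vol (A k) := by
        intro k
        have : u k ∉ S := fun hmm => absurd (sInf_le hmm) (not_le.mpr (hu_mem k).2)
        exact not_lt.mp this
      have hTle : T ≤ vol (⋂ k, A k) := ge_of_tendsto htend (Eventually.of_forall hTk)
      have hsub : {z ∈ Ω | s₀ ≤ φ z} ⊆ {x ∈ Ω | φ x ∈ S} := fun x hx =>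
        ⟨hx.1, hup s₀ hmem (φ x) hx.2⟩
      calc min T (vol Ω) ≤ T := min_le_left _ _
        _ ≤ vol (⋂ k, A k) := hTle
        _ = vol {z ∈ Ω | s₀ ≤ φ z} := by rw [hInter]
        _ ≤ vol {x ∈ Ω | φ x ∈ S} := measure_mono hsub
        _ = _ := by rw [hE]
  · -- s₀ ∉ S
    have hTle : T ≤ μd s₀ := not_lt.mp hmem
    have hsub : {z ∈ Ω | s₀ < φ z} ⊆ {x ∈ Ω | φ x ∈ S} := by
      intro x hx
      obtain ⟨s, hsS, hs⟩ := sInf_lt_iff.mp hx.2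
      exact ⟨hx.1, hup s hsS (φ x) hs.le⟩
    calc min T (vol Ω) ≤ T := min_le_left _ _
      _ ≤ μd s₀ := hTle
      _ ≤ vol {x ∈ Ω | φ x ∈ S} := measure_mono hsub
      _ = _ := by rw [hE]

/-- For `γ ∈ (0,1)`:  `∫_Ω (μφ⁻ ∘ φ)^{−γ} ≥ (1−γ)⁻¹ mₙ(Ω)^{1−γ}`,
where `μφ⁻(t) = mₙ({x ∈ Ω : φ(x) > t})` and `0^{−γ} = ∞`. -/
theorem stmt_5 (n : ℕ) (Ω : Set (EuclideanSpace ℝ (Fin n)))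
    (hΩo : IsOpen Ω) (hΩb : Bornology.IsBounded Ω)
    (φ : EuclideanSpace ℝ (Fin n) → ℝ≥0∞) (hφ : Measurable φ)
    (γ : ℝ) (hγ0 : 0 < γ) (hγ1 : γ < 1) :
    ENNReal.ofReal (1 / (1 - γ)) * (volume Ω) ^ (1 - γ) ≤
      ∫⁻ x in Ω, (volume {z ∈ Ω | φ x < φ z}) ^ (-γ) ∂volume := by
  set V := volume Ω with hV
  by_cases hV0 : V = 0
  · rw [hV0, ENNReal.zero_rpow_of_pos (by linarith : (0:ℝ) < 1 - γ), mul_zero]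
    exact zero_le
  have hVtop : V ≠ ∞ := hΩb.measure_lt_top.ne
  have hγinv : (1:ℝ) < γ⁻¹ := (one_lt_inv₀ hγ0).mpr hγ1
  have hexp_neg : (-γ⁻¹ : ℝ) < 0 := by simp [inv_pos.mpr hγ0]
  have hexp_lt : (-γ⁻¹ : ℝ) < -1 := by linarith
  set μd : ℝ≥0∞ → ℝ≥0∞ := fun t => volume {z ∈ Ω | t < φ z} with hμd
  have hμd_anti : Antitone μd := fun s t hst =>
    measure_mono fun z hz => ⟨hz.1, lt_of_le_of_lt hst hz.2⟩
  have hμd_meas : Measurable μd := hμd_anti.measurable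
  set f : EuclideanSpace ℝ (Fin n) → ℝ≥0∞ := fun x => μd (φ x) with hf
  have hf_meas : Measurable f := hμd_meas.comp hφ
  set g : EuclideanSpace ℝ (Fin n) → ℝ≥0∞ := fun x => f x ^ (-γ) with hg
  have hg_meas : Measurable g := hf_meas.pow_const _
  have hgoal : (∫⁻ x in Ω, g x ∂volume) = ∫⁻ x in Ω,
      (volume {z ∈ Ω | φ x < φ z}) ^ (-γ) ∂volume := rfl
  refine le_trans ?_ (le_of_eq hgoal)
  set F : ℝ → ℝ≥0∞ := fun t => min ((ENNReal.ofReal t) ^ (-γ⁻¹)) V with hF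
  have hF_meas : Measurable F :=
    ((ENNReal.measurable_ofReal.pow_const _).min measurable_const)
  -- level set lower bound
  have hlevel : ∀ t : ℝ, 0 < t →
      F t ≤ volume {x ∈ Ω | ENNReal.ofReal t < g x} := by
    intro t ht
    set T : ℝ≥0∞ := (ENNReal.ofReal t) ^ (-γ⁻¹) with hT
    have h1 : {x ∈ Ω | f x < T} ⊆ {x ∈ Ω | ENNReal.ofReal t < g x} := by
      rintro x ⟨hx1, hx2⟩
      refine ⟨hx1, ?_⟩
      by_contra hcon
      push_neg at hcon
      have h2 := ennreal_rpow_anti hexp_neg hcon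
      simp only [hg] at h2
      rw [← ENNReal.rpow_mul,
        show (-γ) * (-γ⁻¹) = 1 by field_simp, ENNReal.rpow_one] at h2
      exact absurd hx2 (not_lt.mpr h2)
    calc F t ≤ min T V := le_rfl
      _ ≤ volume {x ∈ Ω | f x < T} :=
        key_claim volume Ω hΩo.measurableSet hVtop φ hφ T
      _ ≤ _ := measure_mono h1
  -- truncation
  have htrunc : ∀ k : ℕ, (∫⁻ t in Ioo (0:ℝ) k, F t) ≤ ∫⁻ x in Ω, g x ∂volume := by
    intro k
    set h : EuclideanSpace ℝ (Fin n) → ℝ := fun x => (min (g x) k).toReal with hh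
    have h_nn : ∀ x, 0 ≤ h x := fun x => ENNReal.toReal_nonneg
    have h_meas : Measurable h := (hg_meas.min measurable_const).ennreal_toReal
    have hmin_ne : ∀ x, min (g x) (k:ℝ≥0∞) ≠ ∞ :=
      fun x => ne_top_of_le_ne_top (ENNReal.natCast_ne_top k) (min_le_right _ _)
    have hofReal : ∀ x, ENNReal.ofReal (h x) = min (g x) k := fun x =>
      ENNReal.ofReal_toReal (hmin_ne x)
    have key := lintegral_eq_lintegral_meas_lt (volume.restrict Ω)
      (ae_of_all _ h_nn) h_meas.aemeasurable
    have hbound : ∀ t ∈ Ioo (0:ℝ) (k:ℝ),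
        F t ≤ (volume.restrict Ω) {a | t < h a} := by
      intro t ht
      have hsub : {x ∈ Ω | ENNReal.ofReal t < g x} ⊆ {a | t < h a} ∩ Ω := by
        rintro x ⟨hx1, hx2⟩
        refine ⟨?_, hx1⟩
        have htk : ENNReal.ofReal t < (k:ℝ≥0∞) := by
          rw [← ENNReal.ofReal_natCast k]
          exact ENNReal.ofReal_lt_ofReal_iff_of_nonneg ht.1.le |>.mpr ht.2
        have hlt : ENNReal.ofReal t < min (g x) k := lt_min hx2 htk
        have := (ENNReal.toReal_lt_toReal ENNReal.ofReal_ne_top (hmin_ne x)).mpr hlt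
        rwa [ENNReal.toReal_ofReal ht.1.le] at this
      rw [Measure.restrict_apply (measurableSet_lt measurable_const h_meas)]
      exact le_trans (hlevel t ht.1) (measure_mono hsub)
    calc (∫⁻ t in Ioo (0:ℝ) k, F t)
        ≤ ∫⁻ t in Ioo (0:ℝ) k, (volume.restrict Ω) {a | t < h a} :=
          setLIntegral_mono' measurableSet_Ioo hbound
      _ ≤ ∫⁻ t in Ioi (0:ℝ), (volume.restrict Ω) {a | t < h a} :=
          lintegral_mono_set Ioo_subset_Ioi_self
      _ = ∫⁻ x in Ω, ENNReal.ofReal (h x) ∂volume := key.symm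
      _ = ∫⁻ x in Ω, min (g x) k ∂volume := lintegral_congr fun x => hofReal x
      _ ≤ ∫⁻ x in Ω, g x ∂volume := lintegral_mono fun x => min_le_left _ _
  -- monotone convergence over Ioo 0 k
  have hsup : (∫⁻ t in Ioi (0:ℝ), F t) ≤ ∫⁻ x in Ω, g x ∂volume := by
    have hptwise : ∀ t : ℝ,
        (⨆ k : ℕ, (Ioo (0:ℝ) (k:ℝ)).indicator F t) = (Ioi (0:ℝ)).indicator F t := by
      intro t
      refine le_antisymm (iSup_le fun k =>
        Set.indicator_le_indicator_of_subset Ioo_subset_Ioi_self (fun _ => zero_le) t) ?_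
      by_cases ht : t ∈ Ioi (0:ℝ)
      · obtain ⟨k, hk⟩ := exists_nat_gt t
        calc (Ioi (0:ℝ)).indicator F t = F t := Set.indicator_of_mem ht F
          _ = (Ioo (0:ℝ) (k:ℝ)).indicator F t := (Set.indicator_of_mem (mem_Ioo.mpr ⟨ht, hk⟩) F).symm
          _ ≤ ⨆ k : ℕ, (Ioo (0:ℝ) (k:ℝ)).indicator F t := le_iSup (fun k : ℕ => (Ioo (0:ℝ) (k:ℝ)).indicator F t) k
      · rw [Set.indicator_of_notMem ht]
        exact zero_le
    have hmono : Monotone fun k : ℕ => (Ioo (0:ℝ) (k:ℝ)).indicator F := by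
      intro k l hkl
      exact Set.indicator_le_indicator_of_subset
        (Ioo_subset_Ioo_right (Nat.cast_le.mpr hkl)) (fun _ => zero_le)
    have hmeas : ∀ k : ℕ, Measurable ((Ioo (0:ℝ) (k:ℝ)).indicator F) :=
      fun k => hF_meas.indicator measurableSet_Ioo
    calc (∫⁻ t in Ioi (0:ℝ), F t)
        = ∫⁻ t, (Ioi (0:ℝ)).indicator F t := (lintegral_indicator measurableSet_Ioi F).symm
      _ = ∫⁻ t, ⨆ k : ℕ, (Ioo (0:ℝ) (k:ℝ)).indicator F t :=
          lintegral_congr fun t => (hptwise t).symm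
      _ = ⨆ k : ℕ, ∫⁻ t, (Ioo (0:ℝ) (k:ℝ)).indicator F t := lintegral_iSup hmeas hmono
      _ = ⨆ k : ℕ, ∫⁻ t in Ioo (0:ℝ) (k:ℝ), F t := by
          refine iSup_congr fun k => ?_
          rw [lintegral_indicator measurableSet_Ioo]
      _ ≤ ∫⁻ x in Ω, g x ∂volume := iSup_le htrunc
  refine le_trans ?_ hsup
  -- explicit computation
  set a : ℝ≥0∞ := V ^ (-γ) with ha
  have ha0 : a ≠ 0 := by
    simp only [ha, ne_eq, ENNReal.rpow_eq_zero_iff, not_or]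
    push_neg
    exact ⟨fun h => absurd h hV0, fun h => absurd h hVtop⟩
  have hatop : a ≠ ∞ := by
    simp only [ha, ne_eq, ENNReal.rpow_eq_top_iff, not_or]
    push_neg
    exact ⟨fun h => absurd h hV0, fun h => absurd h hVtop⟩
  set aR := a.toReal with haRdef
  have haR : 0 < aR := ENNReal.toReal_pos ha0 hatop
  have hOfaR : ENNReal.ofReal aR = a := ENNReal.ofReal_toReal hatop
  have haV : a ^ (-γ⁻¹) = V := by
    rw [ha, ← ENNReal.rpow_mul, show (-γ) * (-γ⁻¹) = 1 by field_simp, ENNReal.rpow_one]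
  have hunion : (∫⁻ t in Ioi (0:ℝ), F t)
      = (∫⁻ t in Ioc (0:ℝ) aR, F t) + ∫⁻ t in Ioi aR, F t := by
    rw [← Ioc_union_Ioi_eq_Ioi haR.le, lintegral_union measurableSet_Ioi
      (Ioc_disjoint_Ioi le_rfl)]
  have hp1 : V * a ≤ ∫⁻ t in Ioc (0:ℝ) aR, F t := by
    have hb : ∀ t ∈ Ioc (0:ℝ) aR, V ≤ F t := by
      intro t ht
      refine le_min ?_ le_rfl
      have h1 : ENNReal.ofReal t ≤ a := by
        rw [← hOfaR]; exact ENNReal.ofReal_le_ofReal ht.2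
      calc V = a ^ (-γ⁻¹) := haV.symm
        _ ≤ (ENNReal.ofReal t) ^ (-γ⁻¹) := ennreal_rpow_anti hexp_neg h1
    calc V * a = V * volume (Ioc (0:ℝ) aR) := by
          rw [Real.volume_Ioc, sub_zero, hOfaR]
      _ = ∫⁻ _ in Ioc (0:ℝ) aR, V := (setLIntegral_const _ _).symm
      _ ≤ ∫⁻ t in Ioc (0:ℝ) aR, F t := setLIntegral_mono' measurableSet_Ioc hb
  have hint : IntegrableOn (fun t : ℝ => t ^ (-γ⁻¹)) (Ioi aR) :=
    integrableOn_Ioi_rpow_of_lt hexp_lt haR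
  have hp2 : ENNReal.ofReal (∫ t in Ioi aR, t ^ (-γ⁻¹)) ≤ ∫⁻ t in Ioi aR, F t := by
    rw [ofReal_integral_eq_lintegral_ofReal hint ((ae_restrict_iff' measurableSet_Ioi).mpr
      (ae_of_all _ fun t ht => Real.rpow_nonneg (le_of_lt (haR.trans ht)) _))]
    refine setLIntegral_mono' measurableSet_Ioi ?_
    intro t ht
    have ht0 : (0:ℝ) < t := haR.trans ht
    have h1 : a ≤ ENNReal.ofReal t := by
      rw [← hOfaR]; exact ENNReal.ofReal_le_ofReal (le_of_lt ht)
    have h2 : (ENNReal.ofReal t) ^ (-γ⁻¹) ≤ V := haV ▸ ennreal_rpow_anti hexp_neg h1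
    rw [← ENNReal.ofReal_rpow_of_pos ht0]
    exact le_min le_rfl h2
  -- numerics
  have hVr : 0 < V.toReal := ENNReal.toReal_pos hV0 hVtop
  set Vr := V.toReal with hVrdef
  have h1γ : (1:ℝ) - γ ≠ 0 := by linarith
  have hden : (-γ⁻¹ + 1 : ℝ) ≠ 0 := by
    intro h; have : γ⁻¹ = 1 := by linarith
    rw [this] at hγinv; exact lt_irrefl _ hγinv
  have haRV : aR = Vr ^ (-γ) := by rw [haRdef, ha, hVrdef, ← ENNReal.toReal_rpow]
  have hval : (∫ t in Ioi aR, t ^ (-γ⁻¹)) = γ / (1-γ) * Vr ^ (1-γ) := by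
    rw [integral_Ioi_rpow_of_lt hexp_lt haR, haRV, ← Real.rpow_mul hVr.le,
      show (-γ) * (-γ⁻¹ + 1) = 1 - γ by field_simp; ring, div_eq_iff hden]
    field_simp
    ring
  have hVa : V * a = V ^ ((1:ℝ)-γ) := by
    rw [ha]
    nth_rewrite 1 [← ENNReal.rpow_one V]
    rw [← ENNReal.rpow_add _ _ hV0 hVtop, show (1:ℝ) + -γ = 1 - γ by ring]
  have hpow : V ^ ((1:ℝ)-γ) = ENNReal.ofReal (Vr ^ (1-γ)) := by
    conv_lhs => rw [← ENNReal.ofReal_toReal hVtop]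
    rw [ENNReal.ofReal_rpow_of_pos hVr, hVrdef]
  have hcoef : (1:ℝ)/(1-γ) = 1 + γ/(1-γ) := by field_simp; ring
  have hγdiv : (0:ℝ) ≤ γ/(1-γ) := div_nonneg hγ0.le (by linarith)
  calc ENNReal.ofReal (1/(1-γ)) * V ^ ((1:ℝ)-γ)
      = (1 + ENNReal.ofReal (γ/(1-γ))) * V ^ ((1:ℝ)-γ) := by
        rw [hcoef, ENNReal.ofReal_add zero_le_one hγdiv, ENNReal.ofReal_one]
    _ = V ^ ((1:ℝ)-γ) + ENNReal.ofReal (γ/(1-γ)) * V ^ ((1:ℝ)-γ) := by ring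
    _ = V * a + ENNReal.ofReal (γ/(1-γ) * Vr ^ (1-γ)) := by
        nth_rewrite 2 [hpow]
        rw [← ENNReal.ofReal_mul hγdiv, ← hVa]
    _ = V * a + ENNReal.ofReal (∫ t in Ioi aR, t ^ (-γ⁻¹)) := by rw [hval]
    _ ≤ (∫⁻ t in Ioc (0:ℝ) aR, F t) + ∫⁻ t in Ioi aR, F t := add_le_add hp1 hp2
    _ = ∫⁻ t in Ioi (0:ℝ), F t := hunion.symm
end
end

section
/- Let Ω ⊂ ℝⁿ be open and bounded with mₙ(Ω) > 0, φ : Ω → [0,∞] measurable, and γ ∈ [1,∞). Then ∫_Ω (μφ⁻(φ(x)))^{−γ} dmₙ(x) = ∞, where μφ⁻(t) = mₙ({x ∈ Ω : φ(x) > t}). -/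
open MeasureTheory Metric ENNReal Set Filter Topology
noncomputable section

/-- For `γ ∈ [1,∞)` and `mₙ(Ω) > 0`:  `∫_Ω (μφ⁻ ∘ φ)^{−γ} = ∞`,
where `μφ⁻(t) = mₙ({x ∈ Ω : φ(x) > t})` and `0^{−γ} = ∞`. -/
theorem stmt_6 (n : ℕ) (Ω : Set (EuclideanSpace ℝ (Fin n)))
    (hΩo : IsOpen Ω) (hΩb : Bornology.IsBounded Ω) (hΩpos : 0 < volume Ω)
    (φ : EuclideanSpace ℝ (Fin n) → ℝ≥0∞) (hφ : Measurable φ)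
    (γ : ℝ) (hγ : 1 ≤ γ) :
    ∫⁻ x in Ω, (volume {z ∈ Ω | φ x < φ z}) ^ (-γ) ∂volume = ⊤ := by
  classical
  have hΩm : MeasurableSet Ω := hΩo.measurableSet
  set M : ℝ≥0∞ := volume Ω with hMdef
  have hMfin : M ≠ ⊤ := hΩb.measure_lt_top.ne
  set μt : ℝ≥0∞ → ℝ≥0∞ := fun t => volume (Ω ∩ φ ⁻¹' (Ioi t)) with hμtdef
  have hanti : Antitone μt := fun a b hab =>
    measure_mono (inter_subset_inter_right _ (preimage_mono (Ioi_subset_Ioi hab)))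
  have hμtm : Measurable μt := hanti.measurable
  set f : EuclideanSpace ℝ (Fin n) → ℝ≥0∞ := fun x => μt (φ x) with hfdef
  have hfm : Measurable f := hμtm.comp hφ
  have hrw : ∀ x, volume {z ∈ Ω | φ x < φ z} = f x := by
    intro x
    rfl
  have hγ0 : -γ < 0 := by linarith
  -- the key distribution estimate
  have key : ∀ s : ℝ≥0∞, 0 < s → s ≤ M → s ≤ volume {x ∈ Ω | f x < s} := by
    intro s hs0 hsM
    set A : Set ℝ≥0∞ := {t | μt t < s} with hA
    have hup : ∀ {t t' : ℝ≥0∞}, t ∈ A → t ≤ t' → t' ∈ A := fun ht htt' =>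
      lt_of_le_of_lt (hanti htt') ht
    set t0 := sInf A with ht0
    have hmem : ∀ {u : ℝ≥0∞}, t0 < u → u ∈ A := by
      intro u hu
      obtain ⟨t, htA, htu⟩ := sInf_lt_iff.mp hu
      exact hup htA htu.le
    by_cases ht0A : t0 ∈ A
    · -- `Ω ∩ {φ ≥ t0} ⊆ {f < s}` and this set has measure `≥ s`
      have hsub2 : Ω ∩ φ ⁻¹' (Ici t0) ⊆ {x ∈ Ω | f x < s} := by
        intro x hx
        have h2 : t0 ≤ φ x := hx.2
        rcases eq_or_lt_of_le h2 with h | h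
        · exact ⟨hx.1, show μt (φ x) < s by rw [← h]; exact ht0A⟩
        · exact ⟨hx.1, hmem h⟩
      have hbfin : volume (Ω ∩ φ ⁻¹' (Iio t0)) ≠ ⊤ :=
        ne_top_of_le_ne_top hMfin (measure_mono inter_subset_left)
      have hb : volume (Ω ∩ φ ⁻¹' (Iio t0)) + s ≤ M := by
        rcases eq_or_lt_of_le (zero_le : 0 ≤ t0) with h0 | h0
        · have : Iio t0 = (∅ : Set ℝ≥0∞) := by
            rw [← h0]
            ext t
            simp
          simpa [this] using hsM
        · obtain ⟨u, hmono, hmemu, hlim⟩ := exists_seq_strictMono_tendsto' h0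
          have hcn : ∀ m : ℕ, volume (Ω ∩ φ ⁻¹' (Iic (u m))) ≤ M - s := by
            intro m
            have hsum : volume (Ω ∩ φ ⁻¹' (Iic (u m))) + μt (u m) = M := by
              have := measure_inter_add_diff (μ := volume) Ω
                (hφ measurableSet_Iic (t := Iic (u m)))
              rw [diff_eq, ← preimage_compl, compl_Iic] at this
              exact this
            have hums : s ≤ μt (u m) := by
              by_contra hlt
              exact absurd (csInf_le (OrderBot.bddBelow A) (not_le.mp hlt : μt (u m) < s))
                (not_le.mpr (hmemu m).2)
            refine ENNReal.le_sub_of_add_le_right (ne_top_of_le_ne_top hMfin hsM) ?_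
            calc volume (Ω ∩ φ ⁻¹' (Iic (u m))) + s
                ≤ volume (Ω ∩ φ ⁻¹' (Iic (u m))) + μt (u m) := add_le_add_right hums _
              _ = M := hsum
          have hcover : Ω ∩ φ ⁻¹' (Iio t0) ⊆ ⋃ m, Ω ∩ φ ⁻¹' (Iic (u m)) := by
            intro x hx
            have : ∀ᶠ m in atTop, φ x < u m := hlim.eventually (Ioi_mem_nhds hx.2)
            obtain ⟨m, hm⟩ := this.exists
            exact mem_iUnion.mpr ⟨m, hx.1, hm.le⟩
          have hdir : Directed (· ⊆ ·) fun m => Ω ∩ φ ⁻¹' (Iic (u m)) := by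
            refine (Monotone.directed_le ?_)
            intro a b hab
            exact inter_subset_inter_right _ (preimage_mono (Iic_subset_Iic.mpr
              (hmono.monotone hab)))
          have hble : volume (Ω ∩ φ ⁻¹' (Iio t0)) ≤ M - s := by
            refine (measure_mono hcover).trans ?_
            rw [hdir.measure_iUnion]
            exact iSup_le hcn
          calc volume (Ω ∩ φ ⁻¹' (Iio t0)) + s ≤ (M - s) + s := by gcongr
            _ = M := tsub_add_cancel_of_le hsM
      have hab : volume (Ω ∩ φ ⁻¹' (Ici t0)) + volume (Ω ∩ φ ⁻¹' (Iio t0)) = M := by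
        have := measure_inter_add_diff (μ := volume) Ω (hφ measurableSet_Ici (t := Ici t0))
        rw [diff_eq, ← preimage_compl, compl_Ici] at this
        exact this
      have hfinal : s + volume (Ω ∩ φ ⁻¹' (Iio t0))
          ≤ volume (Ω ∩ φ ⁻¹' (Ici t0)) + volume (Ω ∩ φ ⁻¹' (Iio t0)) := by
        rw [hab, add_comm]
        exact hb
      have : s ≤ volume (Ω ∩ φ ⁻¹' (Ici t0)) :=
        (ENNReal.add_le_add_iff_right hbfin).mp hfinal
      exact this.trans (measure_mono hsub2)
    · have hst0 : s ≤ μt t0 := not_lt.mp ht0A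
      have hsub : Ω ∩ φ ⁻¹' (Ioi t0) ⊆ {x ∈ Ω | f x < s} := fun x hx => ⟨hx.1, hmem hx.2⟩
      exact hst0.trans (measure_mono hsub)
  -- rewrite the integrand
  have hgoal : (∫⁻ x in Ω, (f x) ^ (-γ) ∂volume) = ⊤ → 
      (∫⁻ x in Ω, (volume {z ∈ Ω | φ x < φ z}) ^ (-γ) ∂volume) = ⊤ := by
    intro h
    simpa only [hrw] using h
  apply hgoal
  set Z : Set (EuclideanSpace ℝ (Fin n)) := {x ∈ Ω | f x = 0} with hZdef
  have hZm : MeasurableSet Z := hΩm.inter (hfm (measurableSet_singleton 0))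
  by_cases hZ : volume Z = 0
  · -- main case : the sets `B k = {f < s k}` have measure tending to `0`
    set c : ℝ≥0∞ := min 1 M with hcdef
    have hc0 : c ≠ 0 := ne_of_gt (lt_min one_pos hΩpos)
    have hcM : c ≤ M := min_le_right _ _
    have hc1 : c ≤ 1 := min_le_left _ _
    have hcfin : c ≠ ⊤ := ne_top_of_le_ne_top one_ne_top hc1
    set s : ℕ → ℝ≥0∞ := fun k => c * 2⁻¹ ^ k with hsdef
    have hpow1 : ∀ k : ℕ, ((2 : ℝ≥0∞)⁻¹) ^ k ≤ 1 := fun k =>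
      pow_le_one' (by simp [ENNReal.inv_le_one]) k
    have hs0 : ∀ k, s k ≠ 0 := fun k => by
      simp [hsdef, hc0, pow_eq_zero_iff]
    have hsfin : ∀ k, s k ≠ ⊤ := fun k =>
      ENNReal.mul_ne_top hcfin (pow_ne_top (by simp))
    have hsc : ∀ k, s k ≤ c := fun k => by
      simpa using mul_le_mul_right (hpow1 k) c
    have hs1 : ∀ k, s k ≤ 1 := fun k => (hsc k).trans hc1
    have hsM : ∀ k, s k ≤ M := fun k => (hsc k).trans hcM
    have hsanti : Antitone s := fun a b hab =>
      mul_le_mul_right (pow_le_pow_right_of_le_one' (by simp [ENNReal.inv_le_one]) hab) c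
    set B : ℕ → Set (EuclideanSpace ℝ (Fin n)) := fun k => {x ∈ Ω | f x < s k} with hBdef
    have hBm : ∀ k, MeasurableSet (B k) := fun k => hΩm.inter (hfm measurableSet_Iio)
    have hBanti : Antitone B := fun a b hab x hx => ⟨hx.1, lt_of_lt_of_le hx.2 (hsanti hab)⟩
    have hBk : ∀ k, s k ≤ volume (B k) := fun k => key _ (pos_iff_ne_zero.mpr (hs0 k)) (hsM k)
    have hBfin : ∀ k, volume (B k) ≠ ⊤ := fun k =>
      ne_top_of_le_ne_top hMfin (measure_mono (sep_subset _ _))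
    have hslim : Tendsto s atTop (𝓝 0) := by
      have h2 : Tendsto (fun k : ℕ => ((2 : ℝ≥0∞)⁻¹) ^ k) atTop (𝓝 0) :=
        ENNReal.tendsto_pow_atTop_nhds_zero_of_lt_one (by simp [ENNReal.inv_lt_one])
      simpa [hsdef] using ENNReal.Tendsto.const_mul h2 (Or.inr hcfin)
    have hInter : ⋂ k, B k = Z := by
      ext x
      simp only [mem_iInter, hBdef, hZdef, mem_setOf_eq, mem_sep_iff]
      constructor
      · intro h
        refine ⟨(h 0).1, ?_⟩
        by_contra hne
        have hpos : (0 : ℝ≥0∞) < f x := pos_iff_ne_zero.mpr hne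
        obtain ⟨k, hk⟩ := (hslim.eventually (Iio_mem_nhds hpos)).exists
        exact absurd (h k).2 (not_lt.mpr hk.le)
      · rintro ⟨hxΩ, hx0⟩ k
        exact ⟨hxΩ, by rw [hx0]; exact pos_iff_ne_zero.mpr (hs0 k)⟩
    have halim : Tendsto (fun k => volume (B k)) atTop (𝓝 0) := by
      have := tendsto_measure_iInter_atTop (μ := volume)
        (fun k => (hBm k).nullMeasurableSet) hBanti ⟨0, hBfin 0⟩
      rwa [hInter, hZ] at this
    -- choose a rapidly decreasing subsequence
    have step : ∀ m : ℕ, ∃ K, m < K ∧ volume (B K) ≤ volume (B m) / 2 := by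
      intro m
      have hpos : (0 : ℝ≥0∞) < volume (B m) / 2 :=
        ENNReal.div_pos (ne_of_gt (lt_of_lt_of_le (pos_iff_ne_zero.mpr (hs0 m)) (hBk m)))
          (by simp)
      obtain ⟨K, hK1, hK2⟩ :=
        ((halim.eventually (Iio_mem_nhds hpos)).and (eventually_gt_atTop m)).exists
      exact ⟨K, hK2, hK1.le⟩
    set k : ℕ → ℕ := fun j => Nat.rec 0 (fun _ p => (step p).choose) j with hkdef
    have hk_succ : ∀ j, k (j + 1) = (step (k j)).choose := fun j => rfl
    have hklt : ∀ j, k j < k (j + 1) := fun j => by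
      rw [hk_succ]; exact (step (k j)).choose_spec.1
    have hkhalf : ∀ j, volume (B (k (j + 1))) ≤ volume (B (k j)) / 2 := fun j => by
      rw [hk_succ]; exact (step (k j)).choose_spec.2
    have hkmono : StrictMono k := strictMono_nat_of_lt_succ hklt
    set A : ℕ → Set (EuclideanSpace ℝ (Fin n)) := fun j => B (k j) \ B (k (j + 1)) with hAdef
    have hAm : ∀ j, MeasurableSet (A j) := fun j => (hBm _).diff (hBm _)
    have hAsub : ∀ j, A j ⊆ B (k j) := fun j => diff_subset
    have hd : ∀ i j : ℕ, i < j → Disjoint (A i) (A j) := by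
      intro i j hij
      have hBsub : A j ⊆ B (k (i + 1)) :=
        (hAsub j).trans (hBanti (hkmono.monotone hij))
      exact Set.disjoint_left.mpr fun x hxi hxj => hxi.2 (hBsub hxj)
    have hAdisj : Pairwise (Function.onFun Disjoint A) := fun i j hij =>
      hij.lt_or_gt.elim (hd i j) (fun h => (hd j i h).symm)
    have hAmeas : ∀ j, volume (B (k j)) / 2 ≤ volume (A j) := by
      intro j
      have hBsub : B (k (j + 1)) ⊆ B (k j) := hBanti (hkmono (Nat.lt_succ_self j)).le
      rw [hAdef]
      rw [measure_diff hBsub (hBm _).nullMeasurableSet (hBfin _)]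
      refine ENNReal.le_sub_of_add_le_right (hBfin _) ?_
      calc volume (B (k j)) / 2 + volume (B (k (j + 1)))
          ≤ volume (B (k j)) / 2 + volume (B (k j)) / 2 := add_le_add_right (hkhalf j) _
        _ = volume (B (k j)) := ENNReal.add_halves _
    have hpiece : ∀ j, (2 : ℝ≥0∞)⁻¹ ≤ ∫⁻ x in A j, f x ^ (-γ) ∂volume := by
      intro j
      have hlow : ∀ x ∈ A j, (s (k j))⁻¹ ≤ f x ^ (-γ) := by
        intro x hx
        have hx1 : f x < s (k j) := hx.1.2
        calc (s (k j))⁻¹ ≤ (f x)⁻¹ := ENNReal.inv_le_inv' hx1.le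
          _ = f x ^ (-1 : ℝ) := (ENNReal.rpow_neg_one _).symm
          _ ≤ f x ^ (-γ) := ENNReal.rpow_le_rpow_of_exponent_ge
              (le_trans hx1.le (hs1 _)) (by linarith)
      have hconst : (2 : ℝ≥0∞)⁻¹ = (s (k j))⁻¹ * (s (k j) / 2) := by
        rw [div_eq_mul_inv, ← mul_assoc, ENNReal.inv_mul_cancel (hs0 _) (hsfin _), one_mul]
      calc (2 : ℝ≥0∞)⁻¹ = (s (k j))⁻¹ * (s (k j) / 2) := hconst
        _ ≤ (s (k j))⁻¹ * volume (A j) := by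
            gcongr
            exact le_trans (by gcongr; exact hBk _) (hAmeas j)
        _ = ∫⁻ _ in A j, (s (k j))⁻¹ ∂volume := by rw [setLIntegral_const]
        _ ≤ ∫⁻ x in A j, f x ^ (-γ) ∂volume := setLIntegral_mono' (hAm j) hlow
    have hUsub : (⋃ j, A j) ⊆ Ω := iUnion_subset fun j =>
      (hAsub j).trans (sep_subset _ _)
    refine top_le_iff.mp ?_
    calc (⊤ : ℝ≥0∞) = ∑' _ : ℕ, (2 : ℝ≥0∞)⁻¹ :=
          (ENNReal.tsum_const_eq_top_of_ne_zero (by simp)).symm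
      _ ≤ ∑' j, ∫⁻ x in A j, f x ^ (-γ) ∂volume := ENNReal.tsum_le_tsum hpiece
      _ = ∫⁻ x in ⋃ j, A j, f x ^ (-γ) ∂volume := (lintegral_iUnion hAm hAdisj _).symm
      _ ≤ ∫⁻ x in Ω, f x ^ (-γ) ∂volume := lintegral_mono_set hUsub
  · -- the degenerate case : `f = 0` on a set of positive measure
    have hZpos : 0 < volume Z := pos_iff_ne_zero.mpr hZ
    refine top_le_iff.mp ?_
    calc (⊤ : ℝ≥0∞) = ⊤ * volume Z := (ENNReal.top_mul hZ).symm
      _ = ∫⁻ _ in Z, (⊤ : ℝ≥0∞) ∂volume := by rw [setLIntegral_const]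
      _ = ∫⁻ x in Z, f x ^ (-γ) ∂volume := by
          refine (setLIntegral_congr_fun hZm ?_).symm
          intro x hx
          show f x ^ (-γ) = ⊤
          rw [hx.2, ENNReal.zero_rpow_of_neg hγ0]
      _ ≤ ∫⁻ x in Ω, f x ^ (-γ) ∂volume := lintegral_mono_set (sep_subset _ _)
end
end

section
/- Let Ω ⊂ ℝⁿ be open and bounded, φ : Ω → [0,∞] measurable, and r ∈ (0,∞). Then ∫_Ω (μφ⁻(φ(x)))^r dmₙ(x) ≤ (1+r)^{−1}[mₙ(Ω)]^{1+r} ≤ ∫_Ω (μφ⁺(φ(x)))^r dmₙ(x), where μφ⁺(t) = mₙ({x ∈ Ω : φ(x) ≥ t}) and μφ⁻(t) = mₙ({x ∈ Ω : φ(x) > t}). -/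
open MeasureTheory Metric ENNReal Set Filter Topology
noncomputable section

lemma key_calc (M' : ℝ) (hM' : 0 ≤ M') {r : ℝ} (hr : 0 < r) :
    ∫⁻ t in Set.Ioc 0 M', ENNReal.ofReal (M' - t) * ENNReal.ofReal (t ^ (r - 1)) =
      ENNReal.ofReal (M' ^ (1 + r) / (r * (1 + r))) := by
  have i1 : IntervalIntegrable (fun t : ℝ => t ^ (r - 1)) volume 0 M' :=
    intervalIntegral.intervalIntegrable_rpow' (by linarith)
  have i2 : IntervalIntegrable (fun t : ℝ => t ^ r) volume 0 M' :=
    intervalIntegral.intervalIntegrable_rpow' (by linarith)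
  have iw : IntervalIntegrable (fun t : ℝ => M' * t ^ (r - 1) - t ^ r) volume 0 M' :=
    (i1.const_mul M').sub i2
  have heq2 : ∀ t ∈ Set.Ioc (0:ℝ) M', (M' - t) * t ^ (r - 1) = M' * t ^ (r - 1) - t ^ r := by
    intro t ht
    have h1 : t * t ^ (r - 1) = t ^ r := by
      calc t * t ^ (r - 1) = t ^ (1:ℝ) * t ^ (r - 1) := by rw [Real.rpow_one]
      _ = t ^ (1 + (r - 1)) := (Real.rpow_add ht.1 1 (r - 1)).symm
      _ = t ^ r := by ring_nf
    rw [sub_mul, h1]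
  have hw : IntegrableOn (fun t : ℝ => M' * t ^ (r - 1) - t ^ r) (Set.Ioc 0 M') volume :=
    (intervalIntegrable_iff_integrableOn_Ioc_of_le hM').mp iw
  have hint : IntegrableOn (fun t : ℝ => (M' - t) * t ^ (r - 1)) (Set.Ioc 0 M') volume :=
    hw.congr_fun (fun t ht => (heq2 t ht).symm) measurableSet_Ioc
  have hnn : 0 ≤ᵐ[volume.restrict (Set.Ioc 0 M')] fun t : ℝ => (M' - t) * t ^ (r - 1) := by
    filter_upwards [self_mem_ae_restrict measurableSet_Ioc] with t ht
    exact mul_nonneg (sub_nonneg.mpr ht.2) (Real.rpow_nonneg ht.1.le _)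
  have hofm : ∀ t ∈ Set.Ioc (0:ℝ) M',
      ENNReal.ofReal (M' - t) * ENNReal.ofReal (t ^ (r - 1)) =
        ENNReal.ofReal ((M' - t) * t ^ (r - 1)) := by
    intro t ht
    rw [ENNReal.ofReal_mul (sub_nonneg.mpr ht.2)]
  rw [setLIntegral_congr_fun measurableSet_Ioc hofm,
    ← ofReal_integral_eq_lintegral_ofReal hint hnn]
  congr 1
  rw [setIntegral_congr_fun measurableSet_Ioc heq2,
    ← intervalIntegral.integral_of_le hM',
    intervalIntegral.integral_sub (i1.const_mul M') i2,
    intervalIntegral.integral_const_mul,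
    integral_rpow (Or.inl (by linarith : (-1:ℝ) < r - 1)),
    integral_rpow (Or.inl (by linarith : (-1:ℝ) < r))]
  have h0r : (0:ℝ) ^ (r - 1 + 1) = 0 := Real.zero_rpow (by linarith)
  have h0r' : (0:ℝ) ^ (r + 1) = 0 := Real.zero_rpow (by linarith)
  rw [h0r, h0r']
  have hMr : M' ^ (1 + r) = M' * M' ^ r := Real.rpow_one_add' hM' (by linarith)
  have hMrr : M' ^ (r + 1) = M' ^ (1 + r) := by ring_nf
  rw [hMrr, hMr]
  have hr1 : r - 1 + 1 = r := by ring
  rw [hr1]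
  field_simp
  ring

variable {α : Type*} [MeasurableSpace α]

lemma aux_upper (μ : Measure α) [IsFiniteMeasure μ] (φ : α → ℝ≥0∞) (hφ : Measurable φ)
    (t : ℝ≥0∞) : μ {x | t < μ {z | φ x < φ z}} ≤ μ Set.univ - t := by
  set g : ℝ≥0∞ → ℝ≥0∞ := fun s => μ {z | s < φ z} with hg
  have gmono : Antitone g := fun s s' hss' =>
    measure_mono (fun z hz => lt_of_le_of_lt hss' hz)
  set S : Set ℝ≥0∞ := {s | t < g s} with hS
  have hB : {x | t < μ {z | φ x < φ z}} = φ ⁻¹' S := rfl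
  rcases S.eq_empty_or_nonempty with hSe | hSne
  · simp [hB, hSe]
  obtain ⟨s₀, hs₀⟩ := hSne
  have ht : t ≠ ∞ := ne_top_of_lt hs₀
  set a := sSup S with ha
  by_cases hga : t < g a
  · have hBa : φ ⁻¹' S = {x | φ x ≤ a} := by
      ext x
      exact ⟨fun hx => le_sSup (show φ x ∈ S from hx),
        fun hx => lt_of_lt_of_le hga (gmono hx)⟩
    rw [hB, hBa]
    have hsplit : μ {x | φ x ≤ a} + μ {x | a < φ x} = μ Set.univ := by
      have hc : {x | a < φ x} = {x | φ x ≤ a}ᶜ := by ext x; simp [not_le]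
      rw [hc]
      exact measure_add_measure_compl (hφ measurableSet_Iic)
    refine ENNReal.le_sub_of_add_le_right ht ?_
    calc μ {x | φ x ≤ a} + t ≤ μ {x | φ x ≤ a} + g a := add_le_add_right hga.le _
    _ = μ Set.univ := hsplit
  · push_neg at hga
    have ha0 : 0 < a := by
      rcases eq_or_lt_of_le (zero_le : 0 ≤ a) with h0 | h
      · exfalso
        have hs0a : s₀ ≤ a := le_sSup hs₀
        rw [← h0, le_zero_iff] at hs0a
        rw [hs0a] at hs₀
        rw [← h0] at hga
        exact absurd (hs₀ : t < g 0) (not_lt.mpr hga)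
      · exact h
    have hBa : φ ⁻¹' S = {x | φ x < a} := by
      ext x
      constructor
      · intro hx
        refine lt_of_le_of_ne (le_sSup (show φ x ∈ S from hx)) (fun he => ?_)
        have hx' : t < g (φ x) := hx
        rw [he] at hx'
        exact absurd hx' (not_lt.mpr hga)
      · intro hx
        obtain ⟨s, hsS, hs⟩ := lt_sSup_iff.mp (show φ x < sSup S from hx)
        exact lt_of_lt_of_le hsS (gmono hs.le)
    rw [hB, hBa]
    obtain ⟨u, humono, humem, hutend⟩ := exists_seq_strictMono_tendsto' ha0
    have hanti : Antitone fun n => {x | u n < φ x} := fun n m hnm =>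
      fun x hx => lt_of_le_of_lt (humono.monotone hnm) hx
    have hmeas : ∀ n : ℕ, NullMeasurableSet {x | u n < φ x} μ :=
      fun n => (hφ measurableSet_Ioi).nullMeasurableSet
    have hInter : {x | a ≤ φ x} = ⋂ n, {x | u n < φ x} := by
      ext x
      simp only [mem_setOf_eq, mem_iInter]
      constructor
      · intro hx n; exact lt_of_lt_of_le (humem n).2 hx
      · intro hx
        by_contra hlt
        push_neg at hlt
        obtain ⟨n, hn⟩ := (hutend.eventually_const_lt hlt).exists
        exact absurd (hx n) (not_lt.mpr hn.le)
    have hta : t ≤ μ {x | a ≤ φ x} := by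
      rw [hInter, Directed.measure_iInter hmeas
        hanti.directed_ge ⟨0, measure_ne_top μ _⟩]
      refine le_iInf fun n => ?_
      obtain ⟨s, hsS, hs⟩ := lt_sSup_iff.mp (humem n).2
      exact le_of_lt (lt_of_lt_of_le hsS (gmono hs.le))
    have hsplit : μ {x | φ x < a} + μ {x | a ≤ φ x} = μ Set.univ := by
      have hc : {x | a ≤ φ x} = {x | φ x < a}ᶜ := by ext x; simp [not_lt]
      rw [hc]
      exact measure_add_measure_compl (hφ measurableSet_Iio)
    refine ENNReal.le_sub_of_add_le_right ht ?_
    calc μ {x | φ x < a} + t ≤ μ {x | φ x < a} + μ {x | a ≤ φ x} := by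
          gcongr
    _ = μ Set.univ := hsplit

lemma aux_lower (μ : Measure α) [IsFiniteMeasure μ] (φ : α → ℝ≥0∞) (hφ : Measurable φ)
    (t : ℝ≥0∞) : μ {x | μ {z | φ x ≤ φ z} ≤ t} ≤ t := by
  set g : ℝ≥0∞ → ℝ≥0∞ := fun s => μ {z | s ≤ φ z} with hg
  have gmono : Antitone g := fun s s' hss' =>
    measure_mono (fun z hz => le_trans hss' hz)
  set S : Set ℝ≥0∞ := {s | g s ≤ t} with hS
  have hB : {x | μ {z | φ x ≤ φ z} ≤ t} = φ ⁻¹' S := rfl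
  rcases S.eq_empty_or_nonempty with hSe | hSne
  · simp [hB, hSe]
  obtain ⟨s₀, hs₀⟩ := hSne
  set b := sInf S with hb
  by_cases hgb : g b ≤ t
  · have hBb : φ ⁻¹' S = {x | b ≤ φ x} := by
      ext x
      exact ⟨fun hx => sInf_le (show φ x ∈ S from hx),
        fun hx => le_trans (gmono hx) hgb⟩
    rw [hB, hBb]
    exact hgb
  · push_neg at hgb
    have hbtop : b < ∞ := by
      rcases lt_or_eq_of_le (le_top : b ≤ ∞) with h | h
      · exact h
      · exfalso
        have hs0b : b ≤ s₀ := sInf_le hs₀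
        rw [h, top_le_iff] at hs0b
        rw [hs0b] at hs₀
        rw [h] at hgb
        exact absurd (hs₀ : g ⊤ ≤ t) (not_le.mpr hgb)
    have hBb : φ ⁻¹' S = {x | b < φ x} := by
      ext x
      constructor
      · intro hx
        refine lt_of_le_of_ne (sInf_le (show φ x ∈ S from hx)) (fun he => ?_)
        have hx' : g (φ x) ≤ t := hx
        rw [← he] at hx'
        exact absurd hx' (not_le.mpr hgb)
      · intro hx
        obtain ⟨s, hsS, hs⟩ := sInf_lt_iff.mp (show sInf S < φ x from hx)
        exact le_trans (gmono hs.le) hsS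
    rw [hB, hBb]
    obtain ⟨v, hvanti, hvmem, hvtend⟩ := exists_seq_strictAnti_tendsto' hbtop
    have hmono : Monotone fun n => {x | v n ≤ φ x} := fun n m hnm =>
      fun x hx => le_trans (hvanti.antitone hnm) hx
    have hUnion : {x | b < φ x} = ⋃ n, {x | v n ≤ φ x} := by
      ext x
      simp only [mem_setOf_eq, mem_iUnion]
      constructor
      · intro hx
        obtain ⟨n, hn⟩ := (hvtend.eventually_lt_const hx).exists
        exact ⟨n, hn.le⟩
      · rintro ⟨n, hn⟩
        exact lt_of_lt_of_le (hvmem n).1 hn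
    rw [hUnion, Directed.measure_iUnion hmono.directed_le]
    refine iSup_le fun n => ?_
    obtain ⟨s, hsS, hs⟩ := sInf_lt_iff.mp (show sInf S < v n from (hvmem n).1)
    exact le_trans (gmono hs.le) hsS

variable {α : Type*} [MeasurableSpace α]

lemma key_upper (μ : Measure α) [IsFiniteMeasure μ] {F : α → ℝ≥0∞} (hF : Measurable F)
    (hFne : ∀ x, F x ≠ ∞) {r : ℝ} (hr : 0 < r)
    (hbound : ∀ t : ℝ≥0∞, μ {x | t < F x} ≤ μ Set.univ - t) :
    ∫⁻ x, F x ^ r ∂μ ≤ ENNReal.ofReal (1 / (1 + r)) * (μ Set.univ) ^ (1 + r) := by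
  set M : ℝ≥0∞ := μ Set.univ with hMdef
  have hM : M ≠ ∞ := measure_ne_top μ _
  set M' : ℝ := M.toReal with hM'def
  have hM'0 : 0 ≤ M' := ENNReal.toReal_nonneg
  have h1 : ∀ x, F x ^ r = ENNReal.ofReal ((F x).toReal ^ r) := fun x => by
    rw [ENNReal.toReal_rpow, ENNReal.ofReal_toReal
      (ENNReal.rpow_ne_top_of_nonneg hr.le (hFne x))]
  rw [lintegral_congr h1, lintegral_rpow_eq_lintegral_meas_lt_mul μ
    (Eventually.of_forall fun x => ENNReal.toReal_nonneg) hF.ennreal_toReal.aemeasurable hr]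
  have hpt : ∀ t ∈ Ioi (0:ℝ), μ {a | t < (F a).toReal} * ENNReal.ofReal (t ^ (r - 1)) ≤
      ENNReal.ofReal (M' - t) * ENNReal.ofReal (t ^ (r - 1)) := by
    intro t ht
    refine mul_le_mul_left ?_ _
    have hset : {a | t < (F a).toReal} = {a | ENNReal.ofReal t < F a} := by
      ext a
      exact (ENNReal.ofReal_lt_iff_lt_toReal (le_of_lt ht) (hFne a)).symm
    rw [hset]
    calc μ {a | ENNReal.ofReal t < F a} ≤ M - ENNReal.ofReal t := hbound _
    _ = ENNReal.ofReal (M' - t) := by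
        rw [ENNReal.ofReal_sub _ (le_of_lt ht), ENNReal.ofReal_toReal hM]
  have hzero : ∫⁻ t in Ioi M', ENNReal.ofReal (M' - t) * ENNReal.ofReal (t ^ (r - 1)) = 0 := by
    rw [setLIntegral_congr_fun (f := fun t => ENNReal.ofReal (M' - t) *
        ENNReal.ofReal (t ^ (r - 1))) (g := fun _ => 0) measurableSet_Ioi
      (fun t (ht : t ∈ Ioi M') => by
        show ENNReal.ofReal (M' - t) * ENNReal.ofReal (t ^ (r - 1)) = 0
        rw [ENNReal.ofReal_eq_zero.mpr (by linarith [mem_Ioi.mp ht]), zero_mul]),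
      lintegral_zero]
  calc (ENNReal.ofReal r) * ∫⁻ t in Ioi (0:ℝ),
        μ {a | t < (F a).toReal} * ENNReal.ofReal (t ^ (r - 1))
      ≤ (ENNReal.ofReal r) * ∫⁻ t in Ioi (0:ℝ),
        ENNReal.ofReal (M' - t) * ENNReal.ofReal (t ^ (r - 1)) := by
        refine mul_le_mul_right (lintegral_mono_ae ?_) _
        filter_upwards [self_mem_ae_restrict measurableSet_Ioi] with t ht using hpt t ht
    _ = (ENNReal.ofReal r) * ∫⁻ t in Ioc (0:ℝ) M',
        ENNReal.ofReal (M' - t) * ENNReal.ofReal (t ^ (r - 1)) := by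
        rw [← Ioc_union_Ioi_eq_Ioi hM'0,
          lintegral_union measurableSet_Ioi Ioc_disjoint_Ioi_same, hzero, add_zero]
    _ = (ENNReal.ofReal r) * ENNReal.ofReal (M' ^ (1 + r) / (r * (1 + r))) := by
        rw [key_calc M' hM'0 hr]
    _ = ENNReal.ofReal (1 / (1 + r)) * M ^ (1 + r) := by
        rw [← ENNReal.ofReal_toReal (a := M ^ (1 + r))
          (ENNReal.rpow_ne_top_of_nonneg (by linarith) hM), ← ENNReal.toReal_rpow,
          ← ENNReal.ofReal_mul (by positivity), ← ENNReal.ofReal_mul (by positivity)]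
        refine congrArg ENNReal.ofReal ?_
        field_simp
        rw [← hM'def]

lemma key_lower (μ : Measure α) [IsFiniteMeasure μ] {F : α → ℝ≥0∞} (hF : Measurable F)
    (hFne : ∀ x, F x ≠ ∞) {r : ℝ} (hr : 0 < r)
    (hbound : ∀ t : ℝ≥0∞, μ Set.univ - t ≤ μ {x | t < F x}) :
    ENNReal.ofReal (1 / (1 + r)) * (μ Set.univ) ^ (1 + r) ≤ ∫⁻ x, F x ^ r ∂μ := by
  set M : ℝ≥0∞ := μ Set.univ with hMdef
  have hM : M ≠ ∞ := measure_ne_top μ _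
  set M' : ℝ := M.toReal with hM'def
  have hM'0 : 0 ≤ M' := ENNReal.toReal_nonneg
  have h1 : ∀ x, F x ^ r = ENNReal.ofReal ((F x).toReal ^ r) := fun x => by
    rw [ENNReal.toReal_rpow, ENNReal.ofReal_toReal
      (ENNReal.rpow_ne_top_of_nonneg hr.le (hFne x))]
  rw [lintegral_congr h1, lintegral_rpow_eq_lintegral_meas_lt_mul μ
    (Eventually.of_forall fun x => ENNReal.toReal_nonneg) hF.ennreal_toReal.aemeasurable hr]
  have hmeasup : Measurable fun t : ℝ =>
      μ {a | t < (F a).toReal} * ENNReal.ofReal (t ^ (r - 1)) := by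
    have hanti : Antitone fun t : ℝ => μ {a | t < (F a).toReal} := fun t t' h =>
      measure_mono fun a ha => lt_of_le_of_lt h ha
    exact hanti.measurable.mul (by measurability)
  have hpt : ∀ t ∈ Ioc (0:ℝ) M', ENNReal.ofReal (M' - t) * ENNReal.ofReal (t ^ (r - 1)) ≤
      μ {a | t < (F a).toReal} * ENNReal.ofReal (t ^ (r - 1)) := by
    intro t ht
    refine mul_le_mul_left ?_ _
    have hset : {a | t < (F a).toReal} = {a | ENNReal.ofReal t < F a} := by
      ext a
      exact (ENNReal.ofReal_lt_iff_lt_toReal (le_of_lt ht.1) (hFne a)).symm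
    rw [hset]
    calc ENNReal.ofReal (M' - t) = M - ENNReal.ofReal t := by
          rw [ENNReal.ofReal_sub _ (le_of_lt ht.1), ENNReal.ofReal_toReal hM]
    _ ≤ μ {a | ENNReal.ofReal t < F a} := hbound _
  calc ENNReal.ofReal (1 / (1 + r)) * M ^ (1 + r)
      = (ENNReal.ofReal r) * ENNReal.ofReal (M' ^ (1 + r) / (r * (1 + r))) := by
        rw [← ENNReal.ofReal_toReal (a := M ^ (1 + r))
          (ENNReal.rpow_ne_top_of_nonneg (by linarith) hM), ← ENNReal.toReal_rpow,
          ← ENNReal.ofReal_mul (by positivity), ← ENNReal.ofReal_mul (by positivity)]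
        refine congrArg ENNReal.ofReal ?_
        field_simp
        rw [← hM'def]
    _ = (ENNReal.ofReal r) * ∫⁻ t in Ioc (0:ℝ) M',
        ENNReal.ofReal (M' - t) * ENNReal.ofReal (t ^ (r - 1)) := by
        rw [key_calc M' hM'0 hr]
    _ ≤ (ENNReal.ofReal r) * ∫⁻ t in Ioc (0:ℝ) M',
        μ {a | t < (F a).toReal} * ENNReal.ofReal (t ^ (r - 1)) := by
        exact mul_le_mul_right (setLIntegral_mono hmeasup hpt) _
    _ ≤ (ENNReal.ofReal r) * ∫⁻ t in Ioi (0:ℝ),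
        μ {a | t < (F a).toReal} * ENNReal.ofReal (t ^ (r - 1)) := by
        exact mul_le_mul_right (lintegral_mono_set Ioc_subset_Ioi_self) _

/-- For `r ∈ (0,∞)`:
`∫_Ω (μφ⁻ ∘ φ)^r ≤ (1+r)⁻¹ mₙ(Ω)^{1+r} ≤ ∫_Ω (μφ⁺ ∘ φ)^r`. -/
theorem stmt_7 (n : ℕ) (Ω : Set (EuclideanSpace ℝ (Fin n)))
    (hΩo : IsOpen Ω) (hΩb : Bornology.IsBounded Ω)
    (φ : EuclideanSpace ℝ (Fin n) → ℝ≥0∞) (hφ : Measurable φ)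
    (r : ℝ) (hr : 0 < r) :
    (∫⁻ x in Ω, (volume {z ∈ Ω | φ x < φ z}) ^ r ∂volume ≤
        ENNReal.ofReal (1 / (1 + r)) * (volume Ω) ^ (1 + r)) ∧
      ENNReal.ofReal (1 / (1 + r)) * (volume Ω) ^ (1 + r) ≤
        ∫⁻ x in Ω, (volume {z ∈ Ω | φ x ≤ φ z}) ^ r ∂volume := by
  set ν := volume.restrict Ω with hν
  haveI : IsFiniteMeasure ν := ⟨by
    rw [hν, Measure.restrict_apply_univ]
    exact hΩb.measure_lt_top⟩
  have hνuniv : ν Set.univ = volume Ω := Measure.restrict_apply_univ Ω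
  have hset1 : ∀ x, volume {z ∈ Ω | φ x < φ z} = ν {z | φ x < φ z} := fun x => by
    rw [hν, Measure.restrict_apply' hΩo.measurableSet]
    congr 1
    ext z
    simp only [mem_setOf_eq, mem_inter_iff]
    exact ⟨fun h => ⟨h.2, h.1⟩, fun h => ⟨h.2, h.1⟩⟩
  have hset2 : ∀ x, volume {z ∈ Ω | φ x ≤ φ z} = ν {z | φ x ≤ φ z} := fun x => by
    rw [hν, Measure.restrict_apply' hΩo.measurableSet]
    congr 1
    ext z
    simp only [mem_setOf_eq, mem_inter_iff]
    exact ⟨fun h => ⟨h.2, h.1⟩, fun h => ⟨h.2, h.1⟩⟩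
  have hFmeas : Measurable fun x => ν {z | φ x < φ z} := by
    have : Antitone fun s : ℝ≥0∞ => ν {z | s < φ z} := fun s s' hss' =>
      measure_mono fun z hz => lt_of_le_of_lt hss' hz
    exact this.measurable.comp hφ
  have hGmeas : Measurable fun x => ν {z | φ x ≤ φ z} := by
    have : Antitone fun s : ℝ≥0∞ => ν {z | s ≤ φ z} := fun s s' hss' =>
      measure_mono fun z hz => le_trans hss' hz
    exact this.measurable.comp hφ
  constructor
  · calc ∫⁻ x in Ω, (volume {z ∈ Ω | φ x < φ z}) ^ r ∂volume
        = ∫⁻ x, (ν {z | φ x < φ z}) ^ r ∂ν :=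
          lintegral_congr fun x => by rw [hset1 x]
      _ ≤ ENNReal.ofReal (1 / (1 + r)) * (ν Set.univ) ^ (1 + r) :=
          key_upper ν hFmeas (fun x => measure_ne_top ν _) hr
            (fun t => aux_upper ν φ hφ t)
      _ = ENNReal.ofReal (1 / (1 + r)) * (volume Ω) ^ (1 + r) := by rw [hνuniv]
  · have hbound : ∀ t : ℝ≥0∞, ν Set.univ - t ≤ ν {x | t < ν {z | φ x ≤ φ z}} := by
      intro t
      have hcompl : {x | t < ν {z | φ x ≤ φ z}} = {x | ν {z | φ x ≤ φ z} ≤ t}ᶜ := by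
        ext x; simp [not_le]
      have hmeas : MeasurableSet {x | ν {z | φ x ≤ φ z} ≤ t} := hGmeas measurableSet_Iic
      rw [tsub_le_iff_left]
      calc ν Set.univ = ν {x | ν {z | φ x ≤ φ z} ≤ t} + ν {x | t < ν {z | φ x ≤ φ z}} := by
            rw [hcompl]
            exact (measure_add_measure_compl hmeas).symm
        _ ≤ t + ν {x | t < ν {z | φ x ≤ φ z}} :=
            add_le_add_left (aux_lower ν φ hφ t) _
    calc ENNReal.ofReal (1 / (1 + r)) * (volume Ω) ^ (1 + r)
        = ENNReal.ofReal (1 / (1 + r)) * (ν Set.univ) ^ (1 + r) := by rw [hνuniv]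
      _ ≤ ∫⁻ x, (ν {z | φ x ≤ φ z}) ^ r ∂ν :=
          key_lower ν hGmeas (fun x => measure_ne_top ν _) hr hbound
      _ = ∫⁻ x in Ω, (volume {z ∈ Ω | φ x ≤ φ z}) ^ r ∂volume :=
          (lintegral_congr fun x => by rw [hset2 x]).symm
end
end
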